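/- Let t ∈ ℝ and let γ ≥ 0 and λ ≥ 0 be real constants. Let p : ℝ → ℝ with p(t) ∈ [0,1]. Suppose there exist functions ε₁, ε₂ : ℝ → ℝ with ε₁(τ)/τ → 0 and ε₂(τ)/τ → 0 as τ → 0⁺, such that for all sufficiently small τ > 0 the Bayesian-update relation p(t+τ)·(1 − (1 − p(t))·λ·τ + ε₂(τ)) = p(t)·(1 − γ·τ) + ε₁(τ) holds. Then p has a right derivative at t (a derivative within the set [t,∞)) equal to −γ·p(t) + λ·p(t)·(1 − p(t)). -/

import Mathlib

open Filter Set Topology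

/-- Bayesian-update relation for the immunity belief implies the belief ODE
`p' = -γ p + λ p (1-p)` as a right derivative at `t`. -/
theorem belief_update_right_deriv
    (t γ lam : ℝ) (hγ : 0 ≤ γ) (hlam : 0 ≤ lam)
    (p : ℝ → ℝ) (hp : p t ∈ Set.Icc (0 : ℝ) 1)
    (ε₁ ε₂ : ℝ → ℝ)
    (h₁ : Tendsto (fun τ => ε₁ τ / τ) (𝓝[>] (0 : ℝ)) (𝓝 0))
    (h₂ : Tendsto (fun τ => ε₂ τ / τ) (𝓝[>] (0 : ℝ)) (𝓝 0))
    (hB : ∀ᶠ τ in 𝓝[>] (0 : ℝ),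
      p (t + τ) * (1 - (1 - p t) * lam * τ + ε₂ τ) = p t * (1 - γ * τ) + ε₁ τ) :
    HasDerivWithinAt p (-γ * p t + lam * p t * (1 - p t)) (Set.Ici t) t := by
  set a := p t with ha
  set L := -γ * a + lam * a * (1 - a) with hL
  -- ε₂ τ → 0
  have hτ0 : Tendsto (fun τ : ℝ => τ) (𝓝[>] (0:ℝ)) (𝓝 0) :=
    tendsto_id.mono_left nhdsWithin_le_nhds
  have hε₂0 : Tendsto ε₂ (𝓝[>] (0:ℝ)) (𝓝 0) := by
    have : Tendsto (fun τ => ε₂ τ / τ * τ) (𝓝[>] (0:ℝ)) (𝓝 (0 * 0)) := h₂.mul hτ0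
    rw [zero_mul] at this
    refine this.congr' ?_
    filter_upwards [self_mem_nhdsWithin] with τ (hτ : (0:ℝ) < τ)
    field_simp
  -- D τ → 1
  have hD : Tendsto (fun τ => 1 - (1 - a) * lam * τ + ε₂ τ) (𝓝[>] (0:ℝ)) (𝓝 1) := by
    have := ((tendsto_const_nhds (x := (1:ℝ))).sub
      ((tendsto_const_nhds (x := (1 - a) * lam)).mul hτ0)).add hε₂0
    simpa using this
  have hDne : ∀ᶠ τ in 𝓝[>] (0:ℝ), (1 - (1 - a) * lam * τ + ε₂ τ) ≠ 0 := by
    have := hD.eventually_ne (by norm_num : (1:ℝ) ≠ 0)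
    filter_upwards [this] with τ h
    intro h0; exact h (by rw [h0])
  -- limit of the slope expression
  have hlim : Tendsto (fun τ => (L + ε₁ τ / τ - a * (ε₂ τ / τ)) /
      (1 - (1 - a) * lam * τ + ε₂ τ)) (𝓝[>] (0:ℝ)) (𝓝 L) := by
    have hnum : Tendsto (fun τ => L + ε₁ τ / τ - a * (ε₂ τ / τ)) (𝓝[>] (0:ℝ))
        (𝓝 (L + 0 - a * 0)) :=
      ((tendsto_const_nhds.add h₁).sub (tendsto_const_nhds.mul h₂))
    have := hnum.div hD (by norm_num)
    convert this using 2 <;> simp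
  -- identify slope with that expression
  have hslope : ∀ᶠ τ in 𝓝[>] (0:ℝ), (p (t + τ) - a) / τ =
      (L + ε₁ τ / τ - a * (ε₂ τ / τ)) / (1 - (1 - a) * lam * τ + ε₂ τ) := by
    filter_upwards [hB, hDne, self_mem_nhdsWithin] with τ hBτ hDτ (hτ : (0:ℝ) < τ)
    have hτne : τ ≠ 0 := ne_of_gt hτ
    rw [hL]
    field_simp
    have hD' : 1 - τ * lam * (1 - a) + ε₂ τ ≠ 0 := by
      intro h; apply hDτ; linarith
    rw [eq_div_iff hD']
    linear_combination hBτ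
  have hmain : Tendsto (fun τ => (p (t + τ) - a) / τ) (𝓝[>] (0:ℝ)) (𝓝 L) :=
    hlim.congr' (by filter_upwards [hslope] with τ h using h.symm)
  -- translate to HasDerivWithinAt
  rw [hasDerivWithinAt_iff_tendsto_slope]
  have hset : Set.Ici t \ {t} = Set.Ioi t := Set.Ici_sdiff_left
  rw [hset]
  have hmap : Tendsto (fun τ : ℝ => t + τ) (𝓝[>] (0:ℝ)) (𝓝[Set.Ioi t] t) := by
    rw [tendsto_nhdsWithin_iff]
    constructor
    · have : Tendsto (fun τ : ℝ => t + τ) (𝓝[>] (0:ℝ)) (𝓝 (t + 0)) :=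
        (tendsto_const_nhds.add hτ0)
      simpa using this
    · filter_upwards [self_mem_nhdsWithin] with τ (hτ : (0:ℝ) < τ)
      simpa using hτ
  -- surjectivity of the map onto the punctured right nbhd
  have hsurj : Tendsto (slope p t) (𝓝[Set.Ioi t] t) (𝓝 L) := by
    have : 𝓝[Set.Ioi t] t ≤ Filter.map (fun τ : ℝ => t + τ) (𝓝[>] (0:ℝ)) := by
      have : Filter.map (fun s : ℝ => s - t) (𝓝[Set.Ioi t] t) ≤ 𝓝[>] (0:ℝ) := by
        apply tendsto_nhdsWithin_iff.2
        constructor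
        · have : Tendsto (fun s : ℝ => s - t) (𝓝 t) (𝓝 (t - t)) :=
            (continuous_id.sub continuous_const).tendsto t
          simp only [sub_self] at this
          exact this.mono_left nhdsWithin_le_nhds
        · filter_upwards [self_mem_nhdsWithin] with s hs
          exact sub_pos.2 (show t < s from hs)
      calc 𝓝[Set.Ioi t] t
          = Filter.map (fun τ : ℝ => t + τ) (Filter.map (fun s : ℝ => s - t) (𝓝[Set.Ioi t] t)) := by
            rw [Filter.map_map]
            have : ((fun τ : ℝ => t + τ) ∘ fun s : ℝ => s - t) = id := by
              funext s; simp
            rw [this, Filter.map_id]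
        _ ≤ Filter.map (fun τ : ℝ => t + τ) (𝓝[>] (0:ℝ)) := Filter.map_mono this
    refine Tendsto.mono_left ?_ this
    rw [Filter.tendsto_map'_iff]
    refine hmain.congr ?_
    intro τ
    simp [slope, ha, div_eq_inv_mul]
  exact hsurj
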